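/- Let P_{YZ|X} be a semi-deterministic wiretap channel over finite sets X, Y, Z (P_{Y|X}(y|x) = 1{y = f(x)} for a surjective f : X → Y, and P_{Z|X} an arbitrary channel). If an (M, ε, δ)_avg secrecy code exists for P_{YZ|X} with ε < 1, then for every positive integer M′ there exists an (M′, 0, δ′)_avg secrecy code for the same channel, where δ′ = δ/(1−ε) + (1/2)·√( M′/(M·(1−ε)) ); that is, one can trade secrecy for reliability. -/

import Mathlib

open Finset
open scoped Classical

noncomputable section

/-- Total variation distance between two finitely supported distributions. -/
def tv {A : Type*} [Fintype A] (P Q : A → ℝ) : ℝ := (1 / 2) * ∑ a, |P a - Q a|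

lemma aux_sum_sqrt_mul_le {ι : Type*} (s : Finset ι) (u v : ι → ℝ)
    (hu : ∀ i ∈ s, 0 ≤ u i) (hv : ∀ i ∈ s, 0 ≤ v i) :
    ∑ i ∈ s, Real.sqrt (u i * v i) ≤ Real.sqrt (∑ i ∈ s, u i) * Real.sqrt (∑ i ∈ s, v i) := by
  have h1 : ∀ i ∈ s, Real.sqrt (u i * v i) = Real.sqrt (u i) * Real.sqrt (v i) := by
    intro i hi; exact Real.sqrt_mul (hu i hi) _
  rw [Finset.sum_congr rfl h1]
  have h2 := Finset.sum_mul_sq_le_sq_mul_sq s (fun i => Real.sqrt (u i)) (fun i => Real.sqrt (v i))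
  have h3 : ∀ i ∈ s, Real.sqrt (u i) ^ 2 = u i := fun i hi => Real.sq_sqrt (hu i hi)
  have h4 : ∀ i ∈ s, Real.sqrt (v i) ^ 2 = v i := fun i hi => Real.sq_sqrt (hv i hi)
  rw [Finset.sum_congr rfl h3, Finset.sum_congr rfl h4] at h2
  have h0 : 0 ≤ ∑ i ∈ s, Real.sqrt (u i) * Real.sqrt (v i) :=
    Finset.sum_nonneg fun i _ => mul_nonneg (Real.sqrt_nonneg _) (Real.sqrt_nonneg _)
  calc ∑ i ∈ s, Real.sqrt (u i) * Real.sqrt (v i)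
      = Real.sqrt ((∑ i ∈ s, Real.sqrt (u i) * Real.sqrt (v i)) ^ 2) := (Real.sqrt_sq h0).symm
    _ ≤ Real.sqrt ((∑ i ∈ s, u i) * ∑ i ∈ s, v i) := Real.sqrt_le_sqrt h2
    _ = _ := Real.sqrt_mul (Finset.sum_nonneg hu) _

lemma aux_max_eq (u : ℝ) : max u 0 = (|u| + u) / 2 := by
  rcases abs_cases u with ⟨h1, h2⟩ | ⟨h1, h2⟩
  · rw [h1, max_eq_left h2]; ring
  · rw [h1, max_eq_right (le_of_lt h2)]; ring

lemma aux_offdiag {M M' : ℕ} (m m' : Fin M) (hmm : m ≠ m') (φ ψ : Fin M' → ℝ)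
    (hφ : ∑ a, φ a = 0) :
    ∑ κ : Fin M → Fin M', φ (κ m) * ψ (κ m') = 0 := by
  have E := Equiv.funSplitAt m (Fin M')
  have hsum := Equiv.sum_comp (Equiv.funSplitAt m (Fin M')).symm
    (fun κ : Fin M → Fin M' => φ (κ m) * ψ (κ m'))
  rw [← hsum, Fintype.sum_prod_type]
  have key : ∀ (b : Fin M') (ρ : {j // j ≠ m} → Fin M'),
      φ (((Equiv.funSplitAt m (Fin M')).symm (b, ρ)) m) *
      ψ (((Equiv.funSplitAt m (Fin M')).symm (b, ρ)) m')
      = φ b * ψ (ρ ⟨m', Ne.symm hmm⟩) := by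
    intro b ρ
    congr 1
    · congr 1; simp [Equiv.funSplitAt, Equiv.piSplitAt]
    · congr 1; simp [Equiv.funSplitAt, Equiv.piSplitAt, Ne.symm hmm]
  calc ∑ b, ∑ ρ : {j // j ≠ m} → Fin M',
        φ (((Equiv.funSplitAt m (Fin M')).symm (b, ρ)) m) *
        ψ (((Equiv.funSplitAt m (Fin M')).symm (b, ρ)) m')
      = ∑ b, ∑ ρ : {j // j ≠ m} → Fin M', φ b * ψ (ρ ⟨m', Ne.symm hmm⟩) := by
        refine Finset.sum_congr rfl fun b _ => Finset.sum_congr rfl fun ρ _ => key b ρ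
    _ = (∑ b, φ b) * ∑ ρ : {j // j ≠ m} → Fin M', ψ (ρ ⟨m', Ne.symm hmm⟩) := by
        rw [← Finset.sum_mul_sum]
    _ = 0 := by rw [hφ, zero_mul]

lemma aux_diag {M M' : ℕ} (m : Fin M) (φ : Fin M' → ℝ) :
    (M' : ℝ) * ∑ κ : Fin M → Fin M', φ (κ m)
      = (Fintype.card (Fin M → Fin M') : ℝ) * ∑ a, φ a := by
  have hsum := Equiv.sum_comp (Equiv.funSplitAt m (Fin M')).symm
    (fun κ : Fin M → Fin M' => φ (κ m))
  have key : ∀ (b : Fin M') (ρ : {j // j ≠ m} → Fin M'),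
      φ (((Equiv.funSplitAt m (Fin M')).symm (b, ρ)) m) = φ b := by
    intro b ρ; congr 1; simp [Equiv.funSplitAt, Equiv.piSplitAt]
  have h1 : ∑ κ : Fin M → Fin M', φ (κ m)
      = ((M' ^ (M - 1) : ℕ) : ℝ) * ∑ a, φ a := by
    rw [← hsum, Fintype.sum_prod_type]
    rw [Finset.sum_congr rfl (fun b _ => Finset.sum_congr rfl (fun ρ _ => key b ρ))]
    simp only [Finset.sum_const, Finset.card_univ, nsmul_eq_mul]
    rw [← Finset.mul_sum]
    congr 1
    rw [Fintype.card_fun, Fintype.card_fin]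
    congr 1
    simp [Fintype.card_subtype_compl]
  have hcard : Fintype.card (Fin M → Fin M') = M' * M' ^ (M - 1) := by
    rw [Fintype.card_fun, Fintype.card_fin, Fintype.card_fin,
      ← pow_succ']
    have := m.pos
    congr 1
    omega
  rw [h1, hcard]
  push_cast
  ring

lemma aux_exists_hash {M M' : ℕ} (hM' : 0 < M') {Z : Type*} [Fintype Z]
    (g : Fin M → Z → ℝ) (c : Z → ℝ)
    (hg0 : ∀ m z, 0 ≤ g m z) (hgc : ∀ m z, g m z ≤ c z) :
    ∃ κ : Fin M → Fin M', ∑ j : Fin M', ∑ z : Z,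
        |(∑ m ∈ univ.filter (fun m => κ m = j), g m z) - (M' : ℝ)⁻¹ * ∑ m, g m z|
      ≤ ∑ z : Z, Real.sqrt ((M' : ℝ) * (c z * ∑ m, g m z)) := by
  haveI : Nonempty (Fin M') := ⟨⟨0, hM'⟩⟩
  set N : ℕ := Fintype.card (Fin M → Fin M') with hN
  have hM'R : (0:ℝ) < (M' : ℝ) := by exact_mod_cast hM'
  have hNpos : 0 < N := Fintype.card_pos
  have hNR : (0:ℝ) < (N : ℝ) := by exact_mod_cast hNpos
  set RHS : ℝ := ∑ z : Z, Real.sqrt ((M' : ℝ) * (c z * ∑ m, g m z)) with hRHS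
  set F : (Fin M → Fin M') → ℝ := fun κ => ∑ j : Fin M', ∑ z : Z,
      |(∑ m ∈ univ.filter (fun m => κ m = j), g m z) - (M' : ℝ)⁻¹ * ∑ m, g m z| with hF
  suffices hav : ∑ κ : Fin M → Fin M', F κ ≤ (N : ℝ) * RHS by
    by_contra hcon
    push_neg at hcon
    have hlt : ∑ κ : Fin M → Fin M', RHS < ∑ κ : Fin M → Fin M', F κ :=
      Finset.sum_lt_sum_of_nonempty univ_nonempty (fun κ _ => hcon κ)
    rw [Finset.sum_const, Finset.card_univ, ← hN, nsmul_eq_mul] at hlt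
    linarith
  -- per (j,z) bound
  have main : ∀ (j : Fin M') (z : Z),
      ∑ κ : Fin M → Fin M',
        |(∑ m ∈ univ.filter (fun m => κ m = j), g m z) - (M' : ℝ)⁻¹ * ∑ m, g m z|
      ≤ (N : ℝ) * Real.sqrt ((M' : ℝ)⁻¹ * ∑ m, (g m z) ^ 2) := by
    intro j z
    set X : Fin M' → ℝ := fun a => (if a = j then (1:ℝ) else 0) - (M' : ℝ)⁻¹ with hX
    have hXsum : ∑ a, X a = 0 := by
      simp only [hX, Finset.sum_sub_distrib, Finset.sum_ite_eq', Finset.mem_univ, if_pos,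
        Finset.sum_const, Finset.card_univ, Fintype.card_fin, nsmul_eq_mul]
      rw [mul_inv_cancel₀ (ne_of_gt hM'R)]; ring
    have hXsq : ∑ a, X a ^ 2 ≤ 1 := by
      have : ∀ a, X a ^ 2 = ((M' : ℝ)⁻¹) ^ 2 + (if a = j then 1 - 2 * (M' : ℝ)⁻¹ else 0) := by
        intro a; simp only [hX]; split_ifs <;> ring
      rw [Finset.sum_congr rfl (fun a _ => this a)]
      simp only [Finset.sum_add_distrib, Finset.sum_ite_eq', Finset.mem_univ, if_pos,
        Finset.sum_const, Finset.card_univ, Fintype.card_fin, nsmul_eq_mul]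
      have : (M' : ℝ) * ((M' : ℝ)⁻¹) ^ 2 = (M' : ℝ)⁻¹ := by
        rw [sq, ← mul_assoc, mul_inv_cancel₀ (ne_of_gt hM'R), one_mul]
      rw [this]
      have h1 : (M' : ℝ)⁻¹ ≤ 1 := by
        rw [inv_le_one_iff₀]; right; exact_mod_cast hM'
      have h2 : (0:ℝ) < (M' : ℝ)⁻¹ := by positivity
      linarith
    have hS : ∀ κ : Fin M → Fin M',
        (∑ m ∈ univ.filter (fun m => κ m = j), g m z) - (M' : ℝ)⁻¹ * ∑ m, g m z
        = ∑ m, g m z * X (κ m) := by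
      intro κ
      rw [Finset.sum_filter]
      have : ∀ m : Fin M, g m z * X (κ m)
          = (if κ m = j then g m z else 0) - (M' : ℝ)⁻¹ * g m z := by
        intro m; simp only [hX]; split_ifs <;> ring
      rw [Finset.sum_congr rfl (fun m _ => this m), Finset.sum_sub_distrib, ← Finset.mul_sum]
    have hvar : ∑ κ : Fin M → Fin M', (∑ m, g m z * X (κ m)) ^ 2
        ≤ (N : ℝ) * ((M' : ℝ)⁻¹ * ∑ m, (g m z) ^ 2) := by
      have expand : ∀ κ : Fin M → Fin M', (∑ m, g m z * X (κ m)) ^ 2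
          = ∑ m, ∑ m'', (g m z * X (κ m)) * (g m'' z * X (κ m'')) := by
        intro κ; rw [sq, Finset.sum_mul_sum]
      rw [Finset.sum_congr rfl (fun κ _ => expand κ), Finset.sum_comm]
      have inner : ∀ m : Fin M,
          ∑ κ : Fin M → Fin M', ∑ m'', (g m z * X (κ m)) * (g m'' z * X (κ m''))
          ≤ (N : ℝ) * ((M' : ℝ)⁻¹ * (g m z) ^ 2) := by
        intro m
        rw [Finset.sum_comm]
        have step : ∀ m'' : Fin M,
            ∑ κ : Fin M → Fin M', (g m z * X (κ m)) * (g m'' z * X (κ m''))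
            = if m'' = m then ∑ κ : Fin M → Fin M', (g m z * X (κ m)) ^ 2 else 0 := by
          intro m''
          split_ifs with h
          · subst h; exact Finset.sum_congr rfl (fun κ _ => (sq _).symm)
          · exact aux_offdiag m m'' (Ne.symm h) (fun a => g m z * X a) (fun a => g m'' z * X a)
              (by rw [← Finset.mul_sum, hXsum, mul_zero])
        rw [Finset.sum_congr rfl (fun m'' _ => step m'')]
        rw [Finset.sum_ite_eq' univ m (fun _ => ∑ κ : Fin M → Fin M', (g m z * X (κ m)) ^ 2)]
        rw [if_pos (Finset.mem_univ m)]
        -- ∑_κ (g X(κ m))^2 = N/M' * ∑_a (g X a)^2 ≤ N/M' g^2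
        have hdiag : (M' : ℝ) * ∑ κ : Fin M → Fin M', (g m z * X (κ m)) ^ 2
            = (Fintype.card (Fin M → Fin M') : ℝ) * ∑ a, (g m z * X a) ^ 2 :=
          aux_diag m (fun a => (g m z * X a) ^ 2)
        have hsum2 : ∑ a, (g m z * X a) ^ 2 = (g m z)^2 * ∑ a, X a ^ 2 := by
          rw [Finset.mul_sum]; exact Finset.sum_congr rfl (fun a _ => by ring)
        rw [hsum2] at hdiag
        have hM'ne : (M' : ℝ) ≠ 0 := ne_of_gt hM'R
        have hle : ∑ κ : Fin M → Fin M', (g m z * X (κ m)) ^ 2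
            = (N : ℝ) * (M' : ℝ)⁻¹ * ((g m z)^2 * ∑ a, X a ^ 2) := by
          rw [hN]
          calc ∑ κ : Fin M → Fin M', (g m z * X (κ m)) ^ 2
              = (M' : ℝ)⁻¹ * ((M' : ℝ) * ∑ κ : Fin M → Fin M', (g m z * X (κ m)) ^ 2) := by
                rw [← mul_assoc, inv_mul_cancel₀ hM'ne, one_mul]
            _ = (M' : ℝ)⁻¹ *
                ((Fintype.card (Fin M → Fin M') : ℝ) * ((g m z)^2 * ∑ a, X a ^ 2)) := by
                rw [hdiag]
            _ = _ := by ring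
        rw [hle]
        have hb : (g m z)^2 * ∑ a, X a ^ 2 ≤ (g m z)^2 * 1 :=
          mul_le_mul_of_nonneg_left hXsq (sq_nonneg _)
        calc (N : ℝ) * (M' : ℝ)⁻¹ * ((g m z)^2 * ∑ a, X a ^ 2)
            ≤ (N : ℝ) * (M' : ℝ)⁻¹ * ((g m z)^2 * 1) := by
              apply mul_le_mul_of_nonneg_left hb; positivity
          _ = (N : ℝ) * ((M' : ℝ)⁻¹ * (g m z) ^ 2) := by ring
      calc ∑ m, ∑ κ : Fin M → Fin M', ∑ m'', (g m z * X (κ m)) * (g m'' z * X (κ m''))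
          ≤ ∑ m, (N : ℝ) * ((M' : ℝ)⁻¹ * (g m z) ^ 2) := Finset.sum_le_sum (fun m _ => inner m)
        _ = (N : ℝ) * ((M' : ℝ)⁻¹ * ∑ m, (g m z) ^ 2) := by
            rw [← Finset.mul_sum, ← Finset.mul_sum]
    -- Cauchy–Schwarz over κ
    have hCS : ∑ κ : Fin M → Fin M', |∑ m, g m z * X (κ m)|
        ≤ Real.sqrt (N : ℝ) * Real.sqrt (∑ κ : Fin M → Fin M', (∑ m, g m z * X (κ m)) ^ 2) := by
      have := aux_sum_sqrt_mul_le (univ : Finset (Fin M → Fin M')) (fun _ => (1:ℝ))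
        (fun κ => (∑ m, g m z * X (κ m)) ^ 2) (fun _ _ => zero_le_one) (fun _ _ => sq_nonneg _)
      simp only [one_mul, Real.sqrt_sq_eq_abs, Finset.sum_const, Finset.card_univ,
        nsmul_eq_mul, mul_one] at this
      rw [← hN] at this
      exact this
    rw [Finset.sum_congr rfl (fun κ (_ : κ ∈ univ) => by rw [hS κ])]
    calc ∑ κ : Fin M → Fin M', |∑ m, g m z * X (κ m)|
        ≤ Real.sqrt (N : ℝ) * Real.sqrt (∑ κ : Fin M → Fin M', (∑ m, g m z * X (κ m)) ^ 2) := hCS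
      _ ≤ Real.sqrt (N : ℝ) * Real.sqrt ((N : ℝ) * ((M' : ℝ)⁻¹ * ∑ m, (g m z) ^ 2)) := by
          apply mul_le_mul_of_nonneg_left (Real.sqrt_le_sqrt hvar) (Real.sqrt_nonneg _)
      _ = (N : ℝ) * Real.sqrt ((M' : ℝ)⁻¹ * ∑ m, (g m z) ^ 2) := by
          rw [Real.sqrt_mul hNR.le, ← mul_assoc, Real.mul_self_sqrt hNR.le]
  -- assemble
  have swap : ∑ κ : Fin M → Fin M', F κ = ∑ j : Fin M', ∑ z : Z,
      ∑ κ : Fin M → Fin M',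
        |(∑ m ∈ univ.filter (fun m => κ m = j), g m z) - (M' : ℝ)⁻¹ * ∑ m, g m z| := by
    simp only [hF]
    rw [Finset.sum_comm]
    exact Finset.sum_congr rfl (fun j _ => Finset.sum_comm)
  rw [swap]
  have hz : ∀ z : Z, (M' : ℝ) * Real.sqrt ((M' : ℝ)⁻¹ * ∑ m, (g m z) ^ 2)
      ≤ Real.sqrt ((M' : ℝ) * (c z * ∑ m, g m z)) := by
    intro z
    have h1 : (M' : ℝ) * Real.sqrt ((M' : ℝ)⁻¹ * ∑ m, (g m z) ^ 2)
        = Real.sqrt ((M' : ℝ) * ∑ m, (g m z) ^ 2) := by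
      rw [← Real.sqrt_sq hM'R.le, ← Real.sqrt_mul (sq_nonneg _)]
      congr 1
      field_simp
      rw [Real.sq_sqrt (sq_nonneg _)]
    rw [h1]
    apply Real.sqrt_le_sqrt
    apply mul_le_mul_of_nonneg_left _ hM'R.le
    calc ∑ m, (g m z) ^ 2 ≤ ∑ m, c z * g m z := by
          apply Finset.sum_le_sum
          intro m _
          rw [sq]
          exact mul_le_mul_of_nonneg_right (hgc m z) (hg0 m z)
      _ = c z * ∑ m, g m z := by rw [Finset.mul_sum]
  calc ∑ j : Fin M', ∑ z : Z, ∑ κ : Fin M → Fin M',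
        |(∑ m ∈ univ.filter (fun m => κ m = j), g m z) - (M' : ℝ)⁻¹ * ∑ m, g m z|
      ≤ ∑ j : Fin M', ∑ z : Z, (N : ℝ) * Real.sqrt ((M' : ℝ)⁻¹ * ∑ m, (g m z) ^ 2) := by
        apply Finset.sum_le_sum; intro j _; apply Finset.sum_le_sum; intro z _; exact main j z
    _ = (N : ℝ) * ∑ z : Z, (M' : ℝ) * Real.sqrt ((M' : ℝ)⁻¹ * ∑ m, (g m z) ^ 2) := by
        rw [Finset.sum_const, Finset.card_univ, Fintype.card_fin, nsmul_eq_mul,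
          Finset.mul_sum, Finset.mul_sum]
        exact Finset.sum_congr rfl (fun z _ => by ring)
    _ ≤ (N : ℝ) * RHS := by
        apply mul_le_mul_of_nonneg_left _ hNR.le
        rw [hRHS]
        exact Finset.sum_le_sum (fun z _ => hz z)

lemma aux_core {M M' : ℕ} (hM : 0 < M) (hM' : 0 < M') {Z : Type*} [Fintype Z]
    (a p : Fin M → Z → ℝ) (e δ : ℝ)
    (ha0 : ∀ m z, 0 ≤ a m z) (hap : ∀ m z, a m z ≤ p m z) (hp0 : ∀ m z, 0 ≤ p m z)
    (hptot : ∑ z : Z, ∑ m : Fin M, p m z = 1)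
    (hAtot : ∑ z : Z, ∑ m : Fin M, a m z = 1 - e)
    (h1e : 0 < 1 - e)
    (hsec : (1/2) * ∑ m : Fin M, ∑ z : Z,
      |p m z - (M:ℝ)⁻¹ * ∑ m', p m' z| ≤ δ) :
    ∃ κ : Fin M → Fin M',
      ∑ j : Fin M', ∑ z : Z, |(∑ m ∈ univ.filter (fun m => κ m = j), a m z)
          - (M':ℝ)⁻¹ * ∑ m, a m z|
        ≤ 2*δ + Real.sqrt ((M':ℝ)/(M:ℝ)) * Real.sqrt (1 - e) := by
  classical
  have hMR : (0:ℝ) < M := by exact_mod_cast hM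
  have hM'R : (0:ℝ) < M' := by exact_mod_cast hM'
  have hpz0 : ∀ z, 0 ≤ ∑ m', p m' z := fun z => Finset.sum_nonneg fun m _ => hp0 m z
  set g : Fin M → Z → ℝ := fun m z => min (a m z) ((M:ℝ)⁻¹ * ∑ m', p m' z) with hg
  have hgdef : ∀ m z, g m z = min (a m z) ((M:ℝ)⁻¹ * ∑ m', p m' z) := fun m z => rfl
  have hg0 : ∀ m z, 0 ≤ g m z := fun m z =>
    le_min (ha0 m z) (mul_nonneg (by positivity) (hpz0 z))
  have hgc : ∀ m z, g m z ≤ (M:ℝ)⁻¹ * ∑ m', p m' z := fun m z => min_le_right _ _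
  have hga : ∀ m z, g m z ≤ a m z := fun m z => min_le_left _ _
  obtain ⟨κ, hκ⟩ := aux_exists_hash hM' g (fun z => (M:ℝ)⁻¹ * ∑ m', p m' z) hg0 hgc
  refine ⟨κ, ?_⟩
  set r : Fin M → Z → ℝ := fun m z => a m z - g m z with hr
  have hrdef : ∀ m z, r m z = a m z - g m z := fun m z => rfl
  have hr0 : ∀ m z, 0 ≤ r m z := fun m z => sub_nonneg.mpr (hga m z)
  have hrmax : ∀ m z, r m z ≤ max (p m z - (M:ℝ)⁻¹ * ∑ m', p m' z) 0 := by
    intro m z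
    rw [hrdef, hgdef]
    rcases le_total (a m z) ((M:ℝ)⁻¹ * ∑ m', p m' z) with h | h
    · rw [min_eq_left h]; simpa using le_max_right _ (0:ℝ)
    · rw [min_eq_right h]
      exact le_max_of_le_left (sub_le_sub_right (hap m z) _)
  -- total mass of r is at most δ
  have hRtot : ∑ m : Fin M, ∑ z : Z, r m z ≤ δ := by
    have h1 : ∑ m : Fin M, ∑ z : Z, p m z = 1 := by rw [Finset.sum_comm]; exact hptot
    have h2 : ∑ m : Fin M, ∑ z : Z, ((M:ℝ)⁻¹ * ∑ m', p m' z) = 1 := by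
      have hinner : ∀ m : Fin M, ∑ z : Z, ((M:ℝ)⁻¹ * ∑ m', p m' z) = (M:ℝ)⁻¹ := by
        intro m; rw [← Finset.mul_sum, hptot, mul_one]
      rw [Finset.sum_congr rfl (fun m _ => hinner m), Finset.sum_const, Finset.card_univ,
        Fintype.card_fin, nsmul_eq_mul, mul_inv_cancel₀ (ne_of_gt hMR)]
    have hsum0 : ∑ m : Fin M, ∑ z : Z, (p m z - (M:ℝ)⁻¹ * ∑ m', p m' z) = 0 := by
      rw [Finset.sum_congr rfl (fun (m : Fin M) (_ : m ∈ univ) => Finset.sum_sub_distrib _ _),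
        Finset.sum_sub_distrib, h1, h2, sub_self]
    calc ∑ m : Fin M, ∑ z : Z, r m z
        ≤ ∑ m : Fin M, ∑ z : Z, max (p m z - (M:ℝ)⁻¹ * ∑ m', p m' z) 0 :=
          Finset.sum_le_sum fun m _ => Finset.sum_le_sum fun z _ => hrmax m z
      _ = ∑ m : Fin M, ∑ z : Z,
            (|p m z - (M:ℝ)⁻¹ * ∑ m', p m' z| + (p m z - (M:ℝ)⁻¹ * ∑ m', p m' z)) / 2 :=
          Finset.sum_congr rfl fun m _ => Finset.sum_congr rfl fun z _ => aux_max_eq _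
      _ = ((∑ m : Fin M, ∑ z : Z, |p m z - (M:ℝ)⁻¹ * ∑ m', p m' z|)
            + ∑ m : Fin M, ∑ z : Z, (p m z - (M:ℝ)⁻¹ * ∑ m', p m' z)) / 2 := by
          simp only [add_div, Finset.sum_add_distrib, Finset.sum_div]
      _ ≤ δ := by rw [hsum0]; linarith [hsec]
  -- pointwise triangle inequality
  have key : ∀ (j : Fin M') (z : Z),
      |(∑ m ∈ univ.filter (fun m => κ m = j), a m z) - (M':ℝ)⁻¹ * ∑ m, a m z|
      ≤ |(∑ m ∈ univ.filter (fun m => κ m = j), g m z) - (M':ℝ)⁻¹ * ∑ m, g m z|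
        + ((∑ m ∈ univ.filter (fun m => κ m = j), r m z) + (M':ℝ)⁻¹ * ∑ m, r m z) := by
    intro j z
    have hadd : ∀ s : Finset (Fin M), ∑ m ∈ s, a m z = (∑ m ∈ s, g m z) + ∑ m ∈ s, r m z := by
      intro s
      rw [← Finset.sum_add_distrib]
      exact Finset.sum_congr rfl fun m _ => by rw [hrdef]; ring
    rw [hadd, hadd]
    have hr1 : 0 ≤ ∑ m ∈ univ.filter (fun m => κ m = j), r m z :=
      Finset.sum_nonneg fun m _ => hr0 m z
    have hr2 : 0 ≤ (M':ℝ)⁻¹ * ∑ m, r m z :=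
      mul_nonneg (by positivity) (Finset.sum_nonneg fun m _ => hr0 m z)
    calc |((∑ m ∈ univ.filter (fun m => κ m = j), g m z) +
            ∑ m ∈ univ.filter (fun m => κ m = j), r m z)
          - (M':ℝ)⁻¹ * ((∑ m, g m z) + ∑ m, r m z)|
        = |((∑ m ∈ univ.filter (fun m => κ m = j), g m z) - (M':ℝ)⁻¹ * ∑ m, g m z)
            + ((∑ m ∈ univ.filter (fun m => κ m = j), r m z) - (M':ℝ)⁻¹ * ∑ m, r m z)| := by
          congr 1; ring
      _ ≤ |(∑ m ∈ univ.filter (fun m => κ m = j), g m z) - (M':ℝ)⁻¹ * ∑ m, g m z|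
            + |(∑ m ∈ univ.filter (fun m => κ m = j), r m z) - (M':ℝ)⁻¹ * ∑ m, r m z| :=
          abs_add_le _ _
      _ ≤ _ := by
          apply add_le_add le_rfl
          calc |(∑ m ∈ univ.filter (fun m => κ m = j), r m z) - (M':ℝ)⁻¹ * ∑ m, r m z|
              ≤ |∑ m ∈ univ.filter (fun m => κ m = j), r m z| + |(M':ℝ)⁻¹ * ∑ m, r m z| :=
                abs_sub _ _
            _ = _ := by rw [abs_of_nonneg hr1, abs_of_nonneg hr2]
  -- bound the hash term
  have hbound : ∑ z : Z, Real.sqrt ((M':ℝ) * (((M:ℝ)⁻¹ * ∑ m', p m' z) * ∑ m, g m z))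
      ≤ Real.sqrt ((M':ℝ)/(M:ℝ)) * Real.sqrt (1 - e) := by
    have heq : ∀ z : Z, (M':ℝ) * (((M:ℝ)⁻¹ * ∑ m', p m' z) * ∑ m, g m z)
        = ((M':ℝ)/(M:ℝ)) * ((∑ m', p m' z) * ∑ m, g m z) := fun z => by ring
    calc ∑ z : Z, Real.sqrt ((M':ℝ) * (((M:ℝ)⁻¹ * ∑ m', p m' z) * ∑ m, g m z))
        = ∑ z : Z, Real.sqrt ((M':ℝ)/(M:ℝ)) *
            Real.sqrt ((∑ m', p m' z) * ∑ m, g m z) := by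
          refine Finset.sum_congr rfl fun z _ => ?_
          rw [heq z, Real.sqrt_mul (by positivity)]
      _ = Real.sqrt ((M':ℝ)/(M:ℝ)) * ∑ z : Z, Real.sqrt ((∑ m', p m' z) * ∑ m, g m z) := by
          rw [Finset.mul_sum]
      _ ≤ Real.sqrt ((M':ℝ)/(M:ℝ)) *
            (Real.sqrt (∑ z : Z, ∑ m', p m' z) * Real.sqrt (∑ z : Z, ∑ m, g m z)) := by
          apply mul_le_mul_of_nonneg_left _ (Real.sqrt_nonneg _)
          exact aux_sum_sqrt_mul_le univ _ _ (fun z _ => hpz0 z)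
            (fun z _ => Finset.sum_nonneg fun m _ => hg0 m z)
      _ ≤ Real.sqrt ((M':ℝ)/(M:ℝ)) * Real.sqrt (1 - e) := by
          rw [hptot, Real.sqrt_one, one_mul]
          apply mul_le_mul_of_nonneg_left _ (Real.sqrt_nonneg _)
          apply Real.sqrt_le_sqrt
          rw [← hAtot]
          exact Finset.sum_le_sum fun z _ => Finset.sum_le_sum fun m _ => hga m z
  -- r sums
  have hrsum1 : ∑ j : Fin M', ∑ z : Z, ∑ m ∈ univ.filter (fun m => κ m = j), r m z
      = ∑ m : Fin M, ∑ z : Z, r m z := by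
    rw [Finset.sum_comm]
    rw [Finset.sum_congr rfl fun (z : Z) (_ : z ∈ univ) =>
      Finset.sum_fiberwise_of_maps_to (fun m _ => Finset.mem_univ (κ m)) (fun m => r m z)]
    exact Finset.sum_comm
  have hrsum2 : ∑ j : Fin M', ∑ z : Z, ((M':ℝ)⁻¹ * ∑ m, r m z)
      = ∑ m : Fin M, ∑ z : Z, r m z := by
    have hinner : ∑ z : Z, ((M':ℝ)⁻¹ * ∑ m, r m z) = (M':ℝ)⁻¹ * ∑ z : Z, ∑ m, r m z :=
      (Finset.mul_sum ..).symm
    rw [Finset.sum_congr rfl fun (j : Fin M') (_ : j ∈ univ) => hinner, Finset.sum_const,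
      Finset.card_univ, Fintype.card_fin, nsmul_eq_mul, ← mul_assoc,
      mul_inv_cancel₀ (ne_of_gt hM'R), one_mul]
    exact Finset.sum_comm
  -- assemble
  calc ∑ j : Fin M', ∑ z : Z, |(∑ m ∈ univ.filter (fun m => κ m = j), a m z)
          - (M':ℝ)⁻¹ * ∑ m, a m z|
      ≤ ∑ j : Fin M', ∑ z : Z,
          (|(∑ m ∈ univ.filter (fun m => κ m = j), g m z) - (M':ℝ)⁻¹ * ∑ m, g m z|
          + ((∑ m ∈ univ.filter (fun m => κ m = j), r m z) + (M':ℝ)⁻¹ * ∑ m, r m z)) :=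
        Finset.sum_le_sum fun j _ => Finset.sum_le_sum fun z _ => key j z
    _ = (∑ j : Fin M', ∑ z : Z,
          |(∑ m ∈ univ.filter (fun m => κ m = j), g m z) - (M':ℝ)⁻¹ * ∑ m, g m z|)
        + ((∑ j : Fin M', ∑ z : Z, ∑ m ∈ univ.filter (fun m => κ m = j), r m z)
        + ∑ j : Fin M', ∑ z : Z, ((M':ℝ)⁻¹ * ∑ m, r m z)) := by
        simp only [Finset.sum_add_distrib]
    _ ≤ (Real.sqrt ((M':ℝ)/(M:ℝ)) * Real.sqrt (1 - e)) + (δ + δ) := by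
        refine add_le_add (le_trans hκ hbound) ?_
        rw [hrsum1, hrsum2]
        exact add_le_add hRtot hRtot
    _ = 2*δ + Real.sqrt ((M':ℝ)/(M:ℝ)) * Real.sqrt (1 - e) := by ring

lemma aux_final (Mr M'r e ε δ : ℝ) (hMr : 0 < Mr) (hM'r : 0 < M'r) (hδ : 0 ≤ δ)
    (heε : e ≤ ε) (hε : ε < 1) :
    (1/2) * ((2*δ + Real.sqrt (M'r/Mr) * Real.sqrt (1-e)) / (1-e))
      ≤ δ/(1-ε) + (1/2) * Real.sqrt (M'r/(Mr*(1-ε))) := by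
  have h1ε : 0 < 1 - ε := by linarith
  have h1e : 0 < 1 - e := by linarith
  have t1 : δ/(1-e) ≤ δ/(1-ε) := by
    apply div_le_div_of_nonneg_left hδ h1ε
    linarith
  have t2 : Real.sqrt (M'r/Mr) * Real.sqrt (1-e) / (1-e) ≤ Real.sqrt (M'r/(Mr*(1-ε))) := by
    rw [← Real.sqrt_mul (by positivity), div_le_iff₀ h1e]
    have hrw : Real.sqrt (M'r/(Mr*(1-ε))) * (1-e) = Real.sqrt (M'r/(Mr*(1-ε)) * (1-e)^2) := by
      rw [Real.sqrt_mul (by positivity), Real.sqrt_sq h1e.le]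
    rw [hrw]
    apply Real.sqrt_le_sqrt
    rw [div_mul_eq_mul_div, div_mul_eq_mul_div, div_le_div_iff₀ (by positivity) (by positivity)]
    nlinarith [mul_nonneg (mul_nonneg (mul_nonneg hM'r.le hMr.le) h1e.le)
      (sub_nonneg.mpr heε)]
  have heq : (1/2) * ((2*δ + Real.sqrt (M'r/Mr) * Real.sqrt (1-e)) / (1-e))
      = δ/(1-e) + (1/2) * (Real.sqrt (M'r/Mr) * Real.sqrt (1-e) / (1-e)) := by
    field_simp
  rw [heq]
  have := mul_le_mul_of_nonneg_left t2 (by norm_num : (0:ℝ) ≤ 1/2)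
  linarith

/-- trading secrecy for reliability, semi-deterministic wiretap
channels: for the channel `P_{YZ|X}(y,z|x) = 1{y = f(x)}·P_{Z|X}(z|x)` with `f`
surjective, if an `(M, ε, δ)_avg` secrecy code exists with `ε < 1`, then for every
positive integer `M′` there exists an `(M′, 0, δ′)_avg` secrecy code with
`δ′ = δ/(1−ε) + (1/2)·√(M′/(M·(1−ε)))`. -/
theorem trade_secrecy_for_reliability
    {X Y Z : Type*} [Fintype X] [Fintype Y] [Fintype Z]
    (f : X → Y) (hf : Function.Surjective f)
    (PZX : X → Z → ℝ)
    (hpos : ∀ x z, 0 ≤ PZX x z) (hsum : ∀ x, ∑ z, PZX x z = 1)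
    (M : ℕ) (hM : 0 < M)
    (ε δ : ℝ) (hε : ε < 1)
    (hcode : ∃ (PW : Fin M → ℝ) (enc : Fin M → X → ℝ) (dec : Y → Fin M),
      (∀ m, 0 ≤ PW m) ∧ (∑ m, PW m = 1) ∧
      (∀ m x, 0 ≤ enc m x) ∧ (∀ m, ∑ x, enc m x = 1) ∧
      (∑ m : Fin M, PW m *
          ∑ x ∈ univ.filter (fun x => dec (f x) ≠ m), enc m x ≤ ε) ∧
      tv (fun q : Fin M × Z => PW q.1 * ∑ x, enc q.1 x * PZX x q.2)
         (fun q : Fin M × Z => (M : ℝ)⁻¹ *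
            ∑ m : Fin M, PW m * ∑ x, enc m x * PZX x q.2) ≤ δ)
    (M' : ℕ) (hM' : 0 < M') :
    ∃ (PW : Fin M' → ℝ) (enc : Fin M' → X → ℝ) (dec : Y → Fin M'),
      (∀ m, 0 ≤ PW m) ∧ (∑ m, PW m = 1) ∧
      (∀ m x, 0 ≤ enc m x) ∧ (∀ m, ∑ x, enc m x = 1) ∧
      -- zero error probability
      (∑ m : Fin M', PW m *
          ∑ x ∈ univ.filter (fun x => dec (f x) ≠ m), enc m x = 0) ∧
      -- secrecy leakage at most δ′
      tv (fun q : Fin M' × Z => PW q.1 * ∑ x, enc q.1 x * PZX x q.2)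
         (fun q : Fin M' × Z => (M' : ℝ)⁻¹ *
            ∑ m : Fin M', PW m * ∑ x, enc m x * PZX x q.2)
        ≤ δ / (1 - ε) + (1 / 2) * Real.sqrt ((M' : ℝ) / ((M : ℝ) * (1 - ε))) := by
  classical
  obtain ⟨PW, enc, dec, hPW0, hPW1, henc0, henc1, herr, hsec⟩ := hcode
  have hXne : Nonempty X := by
    by_contra h
    rw [not_nonempty_iff] at h
    have h0 := henc1 ⟨0, hM⟩
    rw [Finset.univ_eq_empty, Finset.sum_empty] at h0
    norm_num at h0
  obtain ⟨x₀⟩ := hXne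
  have hMR : (0:ℝ) < (M:ℝ) := by exact_mod_cast hM
  have hM'R : (0:ℝ) < (M':ℝ) := by exact_mod_cast hM'
  -- error probability
  set e : ℝ := ∑ m : Fin M, PW m * ∑ x ∈ univ.filter (fun x => dec (f x) ≠ m), enc m x
    with he
  have he0 : 0 ≤ e := by
    rw [he]
    exact Finset.sum_nonneg fun m _ =>
      mul_nonneg (hPW0 m) (Finset.sum_nonneg fun x _ => henc0 m x)
  have h1ε : 0 < 1 - ε := by linarith
  have h1e : 0 < 1 - e := by linarith [herr]
  -- probability of correct decoding per message
  set corr : Fin M → ℝ := fun m => ∑ x ∈ univ.filter (fun x => dec (f x) = m), enc m x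
    with hcorr
  have hcorrdef : ∀ m, corr m = ∑ x ∈ univ.filter (fun x => dec (f x) = m), enc m x :=
    fun m => rfl
  have hcorr0 : ∀ m, 0 ≤ corr m := fun m => Finset.sum_nonneg fun x _ => henc0 m x
  have hsplit : ∀ m, corr m + ∑ x ∈ univ.filter (fun x => dec (f x) ≠ m), enc m x = 1 := by
    intro m
    have h1 : corr m = ∑ x, if dec (f x) = m then enc m x else 0 := by
      rw [hcorrdef, Finset.sum_filter]
    have h2 : ∑ x ∈ univ.filter (fun x => dec (f x) ≠ m), enc m x
        = ∑ x, if dec (f x) ≠ m then enc m x else 0 := Finset.sum_filter _ _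
    rw [h1, h2, ← Finset.sum_add_distrib, ← henc1 m]
    refine Finset.sum_congr rfl fun x _ => ?_
    by_cases hx : dec (f x) = m <;> simp [hx]
  have hesum : ∑ m, PW m * corr m = 1 - e := by
    have h3 : ∑ m, (PW m * corr m
        + PW m * ∑ x ∈ univ.filter (fun x => dec (f x) ≠ m), enc m x) = 1 := by
      calc ∑ m, (PW m * corr m
            + PW m * ∑ x ∈ univ.filter (fun x => dec (f x) ≠ m), enc m x)
          = ∑ m, PW m := Finset.sum_congr rfl fun m _ => by rw [← mul_add, hsplit m, mul_one]
        _ = 1 := hPW1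
    rw [Finset.sum_add_distrib, ← he] at h3
    linarith
  -- joint distributions (conditioned-on-success numerator and original)
  set a : Fin M → Z → ℝ := fun m z =>
    PW m * ∑ x ∈ univ.filter (fun x => dec (f x) = m), enc m x * PZX x z with ha
  set p : Fin M → Z → ℝ := fun m z => PW m * ∑ x, enc m x * PZX x z with hp
  have hadef : ∀ m z, a m z
      = PW m * ∑ x ∈ univ.filter (fun x => dec (f x) = m), enc m x * PZX x z := fun m z => rfl
  have hpdef : ∀ m z, p m z = PW m * ∑ x, enc m x * PZX x z := fun m z => rfl
  have ha0 : ∀ m z, 0 ≤ a m z := fun m z =>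
    mul_nonneg (hPW0 m) (Finset.sum_nonneg fun x _ => mul_nonneg (henc0 m x) (hpos x z))
  have hp0 : ∀ m z, 0 ≤ p m z := fun m z =>
    mul_nonneg (hPW0 m) (Finset.sum_nonneg fun x _ => mul_nonneg (henc0 m x) (hpos x z))
  have hap : ∀ m z, a m z ≤ p m z := by
    intro m z
    rw [hadef, hpdef]
    apply mul_le_mul_of_nonneg_left _ (hPW0 m)
    exact Finset.sum_le_sum_of_subset_of_nonneg (Finset.filter_subset _ _)
      (fun x _ _ => mul_nonneg (henc0 m x) (hpos x z))
  have hZ1 : ∀ (s : Finset X) (w : X → ℝ),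
      ∑ z : Z, ∑ x ∈ s, w x * PZX x z = ∑ x ∈ s, w x := by
    intro s w
    rw [Finset.sum_comm]
    exact Finset.sum_congr rfl fun x _ => by rw [← Finset.mul_sum, hsum x, mul_one]
  have hptot : ∑ z : Z, ∑ m : Fin M, p m z = 1 := by
    rw [Finset.sum_comm]
    calc ∑ m : Fin M, ∑ z : Z, p m z = ∑ m : Fin M, PW m := by
          refine Finset.sum_congr rfl fun m _ => ?_
          have : ∑ z : Z, p m z = PW m * ∑ z : Z, ∑ x, enc m x * PZX x z := by
            rw [Finset.mul_sum]
          rw [this, hZ1 univ (enc m), henc1 m, mul_one]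
      _ = 1 := hPW1
  have hAtot : ∑ z : Z, ∑ m : Fin M, a m z = 1 - e := by
    rw [Finset.sum_comm]
    calc ∑ m : Fin M, ∑ z : Z, a m z = ∑ m, PW m * corr m := by
          refine Finset.sum_congr rfl fun m _ => ?_
          have : ∑ z : Z, a m z
              = PW m * ∑ z : Z, ∑ x ∈ univ.filter (fun x => dec (f x) = m),
                  enc m x * PZX x z := by
            rw [Finset.mul_sum]
          rw [this, hZ1 _ (enc m), hcorrdef]
      _ = 1 - e := hesum
  have hδ0 : 0 ≤ δ := by
    refine le_trans ?_ hsec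
    unfold tv
    positivity
  have hsec2 : (1/2) * ∑ m : Fin M, ∑ z : Z, |p m z - (M:ℝ)⁻¹ * ∑ m', p m' z| ≤ δ := by
    simpa only [tv, Fintype.sum_prod_type, ha, hp] using hsec
  obtain ⟨κ, hκ⟩ := aux_core hM hM' a p e δ ha0 hap hp0 hptot hAtot h1e hsec2
  -- the new code
  set tPW : Fin M → ℝ := fun m => PW m * corr m / (1 - e) with htPW
  have htPWdef : ∀ m, tPW m = PW m * corr m / (1 - e) := fun m => rfl
  set tenc : Fin M → X → ℝ := fun m x =>
    if corr m = 0 then (if x = x₀ then 1 else 0)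
    else (if dec (f x) = m then enc m x else 0) / corr m with htenc
  have htencdef : ∀ m x, tenc m x =
      if corr m = 0 then (if x = x₀ then 1 else 0)
      else (if dec (f x) = m then enc m x else 0) / corr m := fun m x => rfl
  have htPW0 : ∀ m, 0 ≤ tPW m := fun m =>
    div_nonneg (mul_nonneg (hPW0 m) (hcorr0 m)) h1e.le
  have htPW1 : ∑ m, tPW m = 1 := by
    calc ∑ m, tPW m = (∑ m, PW m * corr m) / (1 - e) := by
          rw [Finset.sum_div]
      _ = 1 := by rw [hesum, div_self (ne_of_gt h1e)]
  have htenc0 : ∀ m x, 0 ≤ tenc m x := by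
    intro m x
    rw [htencdef]
    split_ifs with h1 h2 h3
    · exact zero_le_one
    · exact le_refl 0
    · exact div_nonneg (henc0 m x) (hcorr0 m)
    · rw [zero_div]
  have htenc1 : ∀ m, ∑ x, tenc m x = 1 := by
    intro m
    by_cases h : corr m = 0
    · calc ∑ x, tenc m x = ∑ x, if x = x₀ then (1:ℝ) else 0 :=
            Finset.sum_congr rfl fun x _ => by rw [htencdef, if_pos h]
        _ = 1 := by rw [Finset.sum_ite_eq' univ x₀ (fun _ => (1:ℝ)), if_pos (Finset.mem_univ _)]
    · calc ∑ x, tenc m x = (∑ x, if dec (f x) = m then enc m x else 0) / corr m := by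
            rw [Finset.sum_div]
            exact Finset.sum_congr rfl fun x _ => by rw [htencdef, if_neg h]
        _ = corr m / corr m := by rw [← Finset.sum_filter, ← hcorrdef]
        _ = 1 := div_self h
  set PW' : Fin M' → ℝ := fun j => ∑ m ∈ univ.filter (fun m => κ m = j), tPW m with hPW'
  have hPW'def : ∀ j, PW' j = ∑ m ∈ univ.filter (fun m => κ m = j), tPW m := fun j => rfl
  set enc' : Fin M' → X → ℝ := fun j x =>
    if PW' j = 0 then (if x = x₀ then 1 else 0)
    else (∑ m ∈ univ.filter (fun m => κ m = j), tPW m * tenc m x) / PW' j with henc'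
  have henc'def : ∀ j x, enc' j x =
      if PW' j = 0 then (if x = x₀ then 1 else 0)
      else (∑ m ∈ univ.filter (fun m => κ m = j), tPW m * tenc m x) / PW' j := fun j x => rfl
  have hPW'0 : ∀ j, 0 ≤ PW' j := fun j => Finset.sum_nonneg fun m _ => htPW0 m
  have hPW'1 : ∑ j, PW' j = 1 := by
    calc ∑ j, PW' j = ∑ m, tPW m :=
          Finset.sum_fiberwise_of_maps_to (fun m _ => Finset.mem_univ (κ m)) tPW
      _ = 1 := htPW1
  have henc'0 : ∀ j x, 0 ≤ enc' j x := by
    intro j x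
    rw [henc'def]
    split_ifs with h1 h2
    · exact zero_le_one
    · exact le_refl 0
    · exact div_nonneg (Finset.sum_nonneg fun m _ => mul_nonneg (htPW0 m) (htenc0 m x))
        (hPW'0 j)
  have hkey : ∀ j x, PW' j * enc' j x
      = ∑ m ∈ univ.filter (fun m => κ m = j), tPW m * tenc m x := by
    intro j x
    by_cases h : PW' j = 0
    · rw [h, zero_mul]
      symm
      refine Finset.sum_eq_zero fun m hm => ?_
      have h0 : tPW m = 0 := by
        have hz := (Finset.sum_eq_zero_iff_of_nonneg (fun m _ => htPW0 m)).mp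
          ((hPW'def j) ▸ h) m hm
        exact hz
      rw [h0, zero_mul]
    · rw [henc'def, if_neg h, mul_comm, div_mul_cancel₀ _ h]
  have henc'1 : ∀ j, ∑ x, enc' j x = 1 := by
    intro j
    by_cases h : PW' j = 0
    · calc ∑ x, enc' j x = ∑ x, if x = x₀ then (1:ℝ) else 0 :=
            Finset.sum_congr rfl fun x _ => by rw [henc'def, if_pos h]
        _ = 1 := by rw [Finset.sum_ite_eq' univ x₀ (fun _ => (1:ℝ)), if_pos (Finset.mem_univ _)]
    · calc ∑ x, enc' j x
          = (∑ x, ∑ m ∈ univ.filter (fun m => κ m = j), tPW m * tenc m x) / PW' j := by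
            rw [Finset.sum_div]
            exact Finset.sum_congr rfl fun x _ => by rw [henc'def, if_neg h]
        _ = (∑ m ∈ univ.filter (fun m => κ m = j), tPW m) / PW' j := by
            congr 1
            rw [Finset.sum_comm]
            exact Finset.sum_congr rfl fun m _ => by rw [← Finset.mul_sum, htenc1 m, mul_one]
        _ = PW' j / PW' j := by rw [← hPW'def]
        _ = 1 := div_self h
  -- the three joint-distribution identities
  have hta : ∀ m z, ∑ x, tPW m * tenc m x * PZX x z = a m z / (1 - e) := by
    intro m z
    by_cases hc : corr m = 0
    · have htz : tPW m = 0 := by rw [htPWdef, hc, mul_zero, zero_div]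
      have haz : a m z = 0 := by
        have hx0 : ∀ x ∈ univ.filter (fun x => dec (f x) = m), enc m x = 0 := by
          intro x hx
          exact (Finset.sum_eq_zero_iff_of_nonneg (fun x _ => henc0 m x)).mp
            ((hcorrdef m) ▸ hc) x hx
        rw [hadef, Finset.sum_eq_zero (fun x hx => by rw [hx0 x hx, zero_mul]), mul_zero]
      rw [haz, zero_div]
      exact Finset.sum_eq_zero fun x _ => by rw [htz, zero_mul, zero_mul]
    · have hterm : ∀ x, tPW m * tenc m x * PZX x z
          = (if dec (f x) = m then PW m * (enc m x * PZX x z) else 0) / (1 - e) := by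
        intro x
        rw [htPWdef, htencdef, if_neg hc]
        split_ifs with h
        · field_simp
        · simp
      calc ∑ x, tPW m * tenc m x * PZX x z
          = ∑ x, (if dec (f x) = m then PW m * (enc m x * PZX x z) else 0) / (1 - e) :=
            Finset.sum_congr rfl fun x _ => hterm x
        _ = (∑ x, if dec (f x) = m then PW m * (enc m x * PZX x z) else 0) / (1 - e) := by
            rw [Finset.sum_div]
        _ = (∑ x ∈ univ.filter (fun x => dec (f x) = m), PW m * (enc m x * PZX x z))
              / (1 - e) := by rw [Finset.sum_filter]
        _ = a m z / (1 - e) := by rw [← Finset.mul_sum, ← hadef]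
  have hjoint : ∀ j z, PW' j * ∑ x, enc' j x * PZX x z
      = (∑ m ∈ univ.filter (fun m => κ m = j), a m z) / (1 - e) := by
    intro j z
    calc PW' j * ∑ x, enc' j x * PZX x z
        = ∑ x, PW' j * enc' j x * PZX x z := by
          rw [Finset.mul_sum]
          exact Finset.sum_congr rfl fun x _ => (mul_assoc _ _ _).symm
      _ = ∑ x, ∑ m ∈ univ.filter (fun m => κ m = j), tPW m * tenc m x * PZX x z := by
          refine Finset.sum_congr rfl fun x _ => ?_
          rw [hkey, Finset.sum_mul]
      _ = ∑ m ∈ univ.filter (fun m => κ m = j), ∑ x, tPW m * tenc m x * PZX x z :=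
          Finset.sum_comm
      _ = ∑ m ∈ univ.filter (fun m => κ m = j), a m z / (1 - e) :=
          Finset.sum_congr rfl fun m _ => hta m z
      _ = (∑ m ∈ univ.filter (fun m => κ m = j), a m z) / (1 - e) := by
          rw [Finset.sum_div]
  have hPZ' : ∀ z, ∑ j, PW' j * ∑ x, enc' j x * PZX x z = (∑ m, a m z) / (1 - e) := by
    intro z
    calc ∑ j, PW' j * ∑ x, enc' j x * PZX x z
        = ∑ j, (∑ m ∈ univ.filter (fun m => κ m = j), a m z) / (1 - e) :=
          Finset.sum_congr rfl fun j _ => hjoint j z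
      _ = (∑ j, ∑ m ∈ univ.filter (fun m => κ m = j), a m z) / (1 - e) := by
          rw [Finset.sum_div]
      _ = (∑ m, a m z) / (1 - e) := by
          rw [Finset.sum_fiberwise_of_maps_to (fun m _ => Finset.mem_univ (κ m))]
  refine ⟨PW', enc', fun y => κ (dec y), hPW'0, hPW'1, henc'0, henc'1, ?_, ?_⟩
  · -- zero error
    refine Finset.sum_eq_zero fun j _ => ?_
    rw [Finset.mul_sum]
    refine Finset.sum_eq_zero fun x hx => ?_
    rw [hkey]
    refine Finset.sum_eq_zero fun m hm => ?_
    have hmj : κ m = j := (Finset.mem_filter.mp hm).2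
    have hxj : ¬ (κ (dec (f x)) = j) := by
      have := (Finset.mem_filter.mp hx).2
      simpa using this
    by_cases hc : corr m = 0
    · rw [htPWdef, hc, mul_zero, zero_div, zero_mul]
    · have hde : ¬ (dec (f x) = m) := fun hdm => hxj (by rw [hdm, hmj])
      rw [htencdef, if_neg hc, if_neg hde, zero_div, mul_zero]
  · -- secrecy
    have htv : tv (fun q : Fin M' × Z => PW' q.1 * ∑ x, enc' q.1 x * PZX x q.2)
        (fun q : Fin M' × Z => (M' : ℝ)⁻¹ * ∑ j : Fin M', PW' j * ∑ x, enc' j x * PZX x q.2)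
        = (1/2) * ∑ j : Fin M', ∑ z : Z, |PW' j * (∑ x, enc' j x * PZX x z)
          - (M':ℝ)⁻¹ * ∑ j' : Fin M', PW' j' * ∑ x, enc' j' x * PZX x z| := by
      simp only [tv, Fintype.sum_prod_type]
    rw [htv]
    have habs : ∀ j z, |PW' j * (∑ x, enc' j x * PZX x z)
        - (M':ℝ)⁻¹ * ∑ j' : Fin M', PW' j' * ∑ x, enc' j' x * PZX x z|
        = |(∑ m ∈ univ.filter (fun m => κ m = j), a m z) - (M':ℝ)⁻¹ * ∑ m, a m z|
            / (1 - e) := by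
      intro j z
      rw [hjoint j z, hPZ' z, ← mul_div_assoc, div_sub_div_same, abs_div, abs_of_pos h1e]
    calc (1/2) * ∑ j : Fin M', ∑ z : Z, |PW' j * (∑ x, enc' j x * PZX x z)
          - (M':ℝ)⁻¹ * ∑ j' : Fin M', PW' j' * ∑ x, enc' j' x * PZX x z|
        = (1/2) * ((∑ j : Fin M', ∑ z : Z,
            |(∑ m ∈ univ.filter (fun m => κ m = j), a m z) - (M':ℝ)⁻¹ * ∑ m, a m z|)
            / (1 - e)) := by
          congr 1
          rw [Finset.sum_div]
          refine Finset.sum_congr rfl fun j _ => ?_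
          rw [Finset.sum_div]
          exact Finset.sum_congr rfl fun z _ => habs j z
      _ ≤ (1/2) * ((2*δ + Real.sqrt ((M':ℝ)/(M:ℝ)) * Real.sqrt (1 - e)) / (1 - e)) := by
          apply mul_le_mul_of_nonneg_left _ (by norm_num : (0:ℝ) ≤ 1/2)
          exact (div_le_div_iff_of_pos_right h1e).mpr hκ
      _ ≤ δ / (1 - ε) + (1/2) * Real.sqrt ((M':ℝ) / ((M:ℝ) * (1 - ε))) :=
          aux_final (M:ℝ) (M':ℝ) e ε δ hMR hM'R hδ0 herr hε
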